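/- For all t with 0 < t ≤ 1, one has (log(1+t))^2 ≤ log(1+t^2). -/

import Mathlib

open Real

lemma aux_hasDerivAt (x : ℝ) (hx : 0 ≤ x) :
    HasDerivAt (fun t : ℝ => Real.log (1 + t ^ 2) - (Real.log (1 + t)) ^ 2)
      (2 * x / (1 + x ^ 2) - 2 * Real.log (1 + x) / (1 + x)) x := by
  have hx2 : (0:ℝ) < 1 + x ^ 2 := by positivity
  have hx1 : (0:ℝ) < 1 + x := by linarith
  have h1 : HasDerivAt (fun t : ℝ => 1 + t ^ 2) (2 * x) x := by
    simpa using (hasDerivAt_pow 2 x).const_add 1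
  have h2 : HasDerivAt (fun t : ℝ => Real.log (1 + t ^ 2)) ((1 + x ^ 2)⁻¹ * (2 * x)) x :=
    (Real.hasDerivAt_log hx2.ne').comp (h := fun t : ℝ => 1 + t ^ 2) x h1
  have h3 : HasDerivAt (fun t : ℝ => 1 + t) 1 x := by
    simpa using (hasDerivAt_id x).const_add 1
  have h4 : HasDerivAt (fun t : ℝ => Real.log (1 + t)) ((1 + x)⁻¹ * 1) x :=
    (Real.hasDerivAt_log hx1.ne').comp (h := fun t : ℝ => 1 + t) x h3
  have h5 : HasDerivAt (fun t : ℝ => (Real.log (1 + t)) ^ 2)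
      (2 * (Real.log (1 + x)) ^ 1 * ((1 + x)⁻¹ * 1)) x := by
    simpa using h4.fun_pow 2
  have := h2.fun_sub h5
  convert this using 1
  all_goals first | rfl | field_simp

theorem log_sq_le (t : ℝ) (h0 : 0 < t) (h1 : t ≤ 1) :
    (Real.log (1 + t)) ^ 2 ≤ Real.log (1 + t ^ 2) := by
  set f : ℝ → ℝ := fun t => Real.log (1 + t ^ 2) - (Real.log (1 + t)) ^ 2 with hf
  have hdiff : ∀ x ∈ Set.Icc (0:ℝ) 1, DifferentiableAt ℝ f x := fun x hx =>
    (aux_hasDerivAt x hx.1).differentiableAt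
  have hmono : MonotoneOn f (Set.Icc (0:ℝ) 1) := by
    apply monotoneOn_of_deriv_nonneg (convex_Icc 0 1)
    · exact fun x hx => (hdiff x hx).continuousAt.continuousWithinAt
    · intro x hx
      rw [interior_Icc] at hx
      exact (hdiff x ⟨hx.1.le, hx.2.le⟩).differentiableWithinAt
    · intro x hx
      rw [interior_Icc] at hx
      obtain ⟨hx0, hx1⟩ := hx
      rw [(aux_hasDerivAt x hx0.le).deriv]
      have hlog : Real.log (1 + x) ≤ x := by
        have := Real.log_le_sub_one_of_pos (show (0:ℝ) < 1 + x by linarith)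
        linarith
      have hlog0 : 0 ≤ Real.log (1 + x) :=
        Real.log_nonneg (by linarith)
      have hA : (0:ℝ) < 1 + x ^ 2 := by positivity
      have hB : (0:ℝ) < 1 + x := by linarith
      rw [sub_nonneg, div_le_div_iff₀ hB hA]
      nlinarith [sq_nonneg x, mul_nonneg hlog0 (sq_nonneg x)]
  have h := hmono (Set.mem_Icc.mpr ⟨le_refl 0, zero_le_one⟩)
    (Set.mem_Icc.mpr ⟨h0.le, h1⟩) h0.le
  have hf0 : f 0 = 0 := by simp [hf]
  have : 0 ≤ f t := hf0 ▸ h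
  simpa [hf] using this
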